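/- Let E be a finite directed graph, {p_v}, {s_e} the universal Cuntz-Krieger family in C*(E), and let V(1) := ss* where s = Σ_{e∈E¹} (1/√n_{r(e)}) s_e. Then V(1) is central in the core AF-algebra F_E = closed span{s_μ s_ν* : μ,ν paths of equal length} if and only if the range map r : E¹ → E⁰ is injective. In particular V(1) = Σ_{v ∈ r(E¹)} (1/n_v) Σ_{e,f ∈ r^{-1}(v)} s_e s_f*, and centrality forces, for any two edges g, h with r(g) = r(h) = v, the identity Σ_{e ∈ r^{-1}(v)} s_e s_h* = Σ_{f ∈ r^{-1}(v)} s_g s_f* and hence g = h. -/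

import Mathlib

/-- A finite directed graph `E = (E⁰, E¹, r, s)`. -/
structure FinGraph where
  V : Type
  E : Type
  [fV : Fintype V]
  [fE : Fintype E]
  [dV : DecidableEq V]
  [dE : DecidableEq E]
  s : E → V
  r : E → V

attribute [instance] FinGraph.fV FinGraph.fE FinGraph.dV FinGraph.dE

/-- A path of length `n` in the graph `G`. -/
structure GPath (G : FinGraph) (n : ℕ) where
  vert : Fin (n + 1) → G.V
  edge : Fin n → G.E
  src_eq : ∀ i : Fin n, G.s (edge i) = vert i.castSucc
  rng_eq : ∀ i : Fin n, G.r (edge i) = vert i.succ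

namespace GPath
variable {G : FinGraph} {n : ℕ}
def src (p : GPath G n) : G.V := p.vert 0
def rng (p : GPath G n) : G.V := p.vert (Fin.last n)
end GPath

/-- A Cuntz–Krieger `E`-family in a C*-algebra `B`: mutually orthogonal nonzero
projections `{P_v}` and partial isometries `{S_e}` with `S_e* S_e = P_{r(e)}` and
`P_v = Σ_{s(e)=v} S_e S_e*` for every non-sink `v`. -/
structure CKFamily (G : FinGraph) (B : Type*) [CStarAlgebra B] where
  P : G.V → B
  S : G.E → B
  P_ne : ∀ v : G.V, P v ≠ 0
  P_sa : ∀ v : G.V, star (P v) = P v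
  P_idem : ∀ v : G.V, P v * P v = P v
  P_orth : ∀ v w : G.V, v ≠ w → P v * P w = 0
  SS : ∀ e : G.E, star (S e) * S e = P (G.r e)
  CK : ∀ v : G.V, (∃ e : G.E, G.s e = v) →
    P v = ∑ e ∈ Finset.univ.filter (fun e => G.s e = v), S e * star (S e)

/-- The partial isometry `S_μ = S_{μ₁} ⋯ S_{μ_n}` associated to a path `μ`. -/
def CKFamily.SP {G : FinGraph} {B : Type*} [CStarAlgebra B] (F : CKFamily G B)
    {n : ℕ} (p : GPath G n) : B :=
  (List.ofFn (fun i : Fin n => F.S (p.edge i))).prod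

/-- The number of edges with range `v`. -/
def nIn (G : FinGraph) (v : G.V) : ℕ := (Finset.univ.filter (fun e => G.r e = v)).card

namespace CKHelper

variable {G : FinGraph} {B : Type} [CStarAlgebra B]

theorem S_mul_P (F : CKFamily G B) (e : G.E) : F.S e * F.P (G.r e) = F.S e := by
  have hp := F.P_idem (G.r e)
  have hsa := F.P_sa (G.r e)
  have hs := F.SS e
  have key : star (F.S e * F.P (G.r e) - F.S e) * (F.S e * F.P (G.r e) - F.S e) = 0 := by
    have hexp : star (F.S e * F.P (G.r e) - F.S e) * (F.S e * F.P (G.r e) - F.S e)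
        = F.P (G.r e) * (star (F.S e) * F.S e) * F.P (G.r e)
          - F.P (G.r e) * (star (F.S e) * F.S e)
          - (star (F.S e) * F.S e) * F.P (G.r e) + star (F.S e) * F.S e := by
      simp only [star_sub, star_mul, hsa]
      noncomm_ring
    rw [hexp, hs]
    simp only [hp]
    abel
  have h0 := (CStarRing.star_mul_self_eq_zero_iff _).mp key
  exact sub_eq_zero.mp h0

theorem P_mul_starS (F : CKFamily G B) (e : G.E) :
    F.P (G.r e) * star (F.S e) = star (F.S e) := by
  have h := congrArg star (S_mul_P F e)
  simpa [star_mul, F.P_sa] using h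

theorem SSS (F : CKFamily G B) (e : G.E) : F.S e * star (F.S e) * F.S e = F.S e := by
  rw [mul_assoc, F.SS, S_mul_P]

theorem absorb {ι : Type} (t : Finset ι) (a : ι → B) {p q : B}
    (hqsa : star q = q) (hqi : q * q = q) (hpsa : star p = p) (hpi : p * p = p)
    (hsum : p = q + ∑ i ∈ t, a i * star (a i)) :
    p * q = q := by
  letI := CStarAlgebra.spectralOrder B
  haveI := CStarAlgebra.spectralOrderedRing B
  set r := ∑ i ∈ t, a i * star (a i) with hrdef
  have hr : 0 ≤ r := Finset.sum_nonneg fun i _ => mul_star_self_nonneg _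
  have h1 : star (q * (1 - p)) * (q * (1 - p)) = (1 - p) * q * (1 - p) := by
    simp only [star_mul, star_sub, star_one, hpsa, hqsa]
    calc (1 - p) * q * (q * (1 - p)) = (1 - p) * (q * q) * (1 - p) := by noncomm_ring
      _ = (1 - p) * q * (1 - p) := by rw [hqi]
  have hq : q = p - r := by rw [hsum]; abel
  have h2 : (1 - p) * q * (1 - p) = -((1 - p) * r * (1 - p)) := by
    rw [hq]
    have hexp : (1 - p) * (p - r) * (1 - p)
        = (p - p * p) * (1 - p) - (1 - p) * r * (1 - p) := by noncomm_ring
    rw [hexp, hpi]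
    simp
  have hge : 0 ≤ (1 - p) * r * (1 - p) := by
    have h3 := star_left_conjugate_nonneg hr (1 - p)
    rwa [star_sub, star_one, hpsa] at h3
  have hle : star (q * (1 - p)) * (q * (1 - p)) ≤ 0 := by
    rw [h1, h2]
    exact neg_nonpos.mpr hge
  have h0 : q * (1 - p) = 0 :=
    (CStarRing.star_mul_self_eq_zero_iff _).mp (le_antisymm hle (star_mul_self_nonneg _))
  have hqp : q * p = q := by
    have h4 : q * 1 - q * p = 0 := by rw [← mul_sub]; exact h0
    have h5 := sub_eq_zero.mp h4
    rw [mul_one] at h5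
    exact h5.symm
  calc p * q = star (q * p) := by rw [star_mul, hpsa, hqsa]
    _ = star q := by rw [hqp]
    _ = q := hqsa

theorem Q_sa (F : CKFamily G B) (e : G.E) :
    star (F.S e * star (F.S e)) = F.S e * star (F.S e) := by
  simp [star_mul]

theorem Q_idem (F : CKFamily G B) (e : G.E) :
    (F.S e * star (F.S e)) * (F.S e * star (F.S e)) = F.S e * star (F.S e) := by
  rw [← mul_assoc, SSS]

theorem PQ (F : CKFamily G B) (e : G.E) :
    F.P (G.s e) * (F.S e * star (F.S e)) = F.S e * star (F.S e) := by
  have hCK := F.CK (G.s e) ⟨e, rfl⟩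
  have hmem : e ∈ Finset.univ.filter (fun g => G.s g = G.s e) := by simp
  have hsum : F.P (G.s e) = F.S e * star (F.S e)
      + ∑ g ∈ (Finset.univ.filter (fun g => G.s g = G.s e)).erase e,
          F.S g * star (F.S g) := by
    rw [hCK]
    exact (Finset.add_sum_erase _ (fun g => F.S g * star (F.S g)) hmem).symm
  exact absorb _ (fun g => F.S g) (Q_sa F e) (Q_idem F e) (F.P_sa _) (F.P_idem _) hsum

theorem QQ (F : CKFamily G B) {e f : G.E} (hne : e ≠ f) (hsf : G.s e = G.s f) :
    (F.S e * star (F.S e)) * (F.S f * star (F.S f)) = 0 := by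
  have hCK := F.CK (G.s e) ⟨e, rfl⟩
  have hmem : e ∈ Finset.univ.filter (fun g => G.s g = G.s e) := by simp
  have hPQe := PQ F e
  have hPQf : F.P (G.s e) * (F.S f * star (F.S f)) = F.S f * star (F.S f) := by
    rw [hsf]; exact PQ F f
  have hQeP : (F.S e * star (F.S e)) * F.P (G.s e) = F.S e * star (F.S e) := by
    have h := congrArg star hPQe
    rwa [star_mul, F.P_sa, Q_sa] at h
  have hp'sa : star (F.P (G.s e) - F.S e * star (F.S e)) = F.P (G.s e) - F.S e * star (F.S e) := by
    rw [star_sub, F.P_sa, Q_sa]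
  have hp'i : (F.P (G.s e) - F.S e * star (F.S e)) * (F.P (G.s e) - F.S e * star (F.S e))
      = F.P (G.s e) - F.S e * star (F.S e) := by
    have hexp : (F.P (G.s e) - F.S e * star (F.S e)) * (F.P (G.s e) - F.S e * star (F.S e))
        = F.P (G.s e) * F.P (G.s e) - F.P (G.s e) * (F.S e * star (F.S e))
          - (F.S e * star (F.S e)) * F.P (G.s e)
          + (F.S e * star (F.S e)) * (F.S e * star (F.S e)) := by noncomm_ring
    rw [hexp, F.P_idem, hPQe, hQeP, Q_idem]
    abel
  have hfmem : f ∈ (Finset.univ.filter (fun g => G.s g = G.s e)).erase e := by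
    simp [Finset.mem_erase, hne.symm, hsf.symm]
  have hsum' : F.P (G.s e) - F.S e * star (F.S e)
      = F.S f * star (F.S f)
        + ∑ g ∈ ((Finset.univ.filter (fun g => G.s g = G.s e)).erase e).erase f,
            F.S g * star (F.S g) := by
    have hsplit1 : ∑ g ∈ Finset.univ.filter (fun g => G.s g = G.s e), F.S g * star (F.S g)
        = F.S e * star (F.S e)
          + ∑ g ∈ (Finset.univ.filter (fun g => G.s g = G.s e)).erase e, F.S g * star (F.S g) :=
      (Finset.add_sum_erase _ (fun g => F.S g * star (F.S g)) hmem).symm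
    have hsplit2 : ∑ g ∈ (Finset.univ.filter (fun g => G.s g = G.s e)).erase e,
          F.S g * star (F.S g)
        = F.S f * star (F.S f)
          + ∑ g ∈ ((Finset.univ.filter (fun g => G.s g = G.s e)).erase e).erase f,
              F.S g * star (F.S g) :=
      (Finset.add_sum_erase _ (fun g => F.S g * star (F.S g)) hfmem).symm
    rw [hCK, hsplit1, hsplit2]
    abel
  have habs := absorb _ (fun g => F.S g) (Q_sa F f) (Q_idem F f) hp'sa hp'i hsum'
  have hfin : F.P (G.s e) * (F.S f * star (F.S f))
      - (F.S e * star (F.S e)) * (F.S f * star (F.S f)) = F.S f * star (F.S f) := by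
    rw [← sub_mul]; exact habs
  rw [hPQf] at hfin
  exact sub_eq_self.mp hfin

theorem PS (F : CKFamily G B) (e : G.E) : F.P (G.s e) * F.S e = F.S e := by
  calc F.P (G.s e) * F.S e = F.P (G.s e) * (F.S e * star (F.S e) * F.S e) := by rw [SSS]
    _ = (F.P (G.s e) * (F.S e * star (F.S e))) * F.S e := by rw [← mul_assoc]
    _ = F.S e * star (F.S e) * F.S e := by rw [PQ]
    _ = F.S e := SSS F e

theorem starS_mul_P (F : CKFamily G B) (e : G.E) :
    star (F.S e) * F.P (G.s e) = star (F.S e) := by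
  have h := congrArg star (PS F e)
  simpa [star_mul, F.P_sa] using h

theorem orthS (F : CKFamily G B) {e f : G.E} (hne : e ≠ f) :
    star (F.S e) * F.S f = 0 := by
  by_cases hs : G.s e = G.s f
  · have h1 : star (F.S e) * (F.S e * star (F.S e)) = star (F.S e) := by
      rw [← mul_assoc, F.SS, P_mul_starS]
    calc star (F.S e) * F.S f
        = (star (F.S e) * (F.S e * star (F.S e))) * ((F.S f * star (F.S f)) * F.S f) := by
          rw [h1, mul_assoc (F.S f), ← mul_assoc (F.S f), SSS]
      _ = star (F.S e) * ((F.S e * star (F.S e)) * (F.S f * star (F.S f))) * F.S f := by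
          noncomm_ring
      _ = 0 := by rw [QQ F hne hs]; simp
  · calc star (F.S e) * F.S f
        = (star (F.S e) * F.P (G.s e)) * (F.P (G.s f) * F.S f) := by rw [starS_mul_P, PS]
      _ = star (F.S e) * (F.P (G.s e) * F.P (G.s f)) * F.S f := by noncomm_ring
      _ = 0 := by rw [F.P_orth _ _ hs]; simp

theorem orthR (F : CKFamily G B) {e f : G.E} (h : G.r e ≠ G.r f) :
    F.S e * star (F.S f) = 0 := by
  calc F.S e * star (F.S f)
      = (F.S e * F.P (G.r e)) * (F.P (G.r f) * star (F.S f)) := by rw [S_mul_P, P_mul_starS]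
    _ = F.S e * (F.P (G.r e) * F.P (G.r f)) * star (F.S f) := by noncomm_ring
    _ = 0 := by rw [F.P_orth _ _ h]; simp

end CKHelper

namespace CKHelper

variable {G : FinGraph} {B : Type} [CStarAlgebra B]

theorem Vexpand (F : CKFamily G B) :
    (∑ e : G.E, (((Real.sqrt (nIn G (G.r e)) : ℝ) : ℂ))⁻¹ • F.S e) *
        star (∑ e : G.E, (((Real.sqrt (nIn G (G.r e)) : ℝ) : ℂ))⁻¹ • F.S e) =
      ∑ v ∈ Finset.univ.filter (fun v => ∃ e : G.E, G.r e = v),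
        ((nIn G v : ℂ))⁻¹ • ∑ e ∈ Finset.univ.filter (fun e => G.r e = v),
          ∑ f ∈ Finset.univ.filter (fun f => G.r f = v), F.S e * star (F.S f) := by
  have hstar : star (∑ e : G.E, (((Real.sqrt (nIn G (G.r e)) : ℝ) : ℂ))⁻¹ • F.S e)
      = ∑ e : G.E, (((Real.sqrt (nIn G (G.r e)) : ℝ) : ℂ))⁻¹ • star (F.S e) := by
    rw [star_sum]
    refine Finset.sum_congr rfl fun e _ => ?_
    rw [star_smul]
    congr 1
    simp [Complex.star_def, map_inv₀, Complex.conj_ofReal]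
  rw [hstar, Finset.sum_mul_sum]
  simp only [smul_mul_smul_comm]
  calc ∑ e : G.E, ∑ f : G.E,
        ((((Real.sqrt (nIn G (G.r e)) : ℝ) : ℂ))⁻¹ * (((Real.sqrt (nIn G (G.r f)) : ℝ) : ℂ))⁻¹)
          • (F.S e * star (F.S f))
      = ∑ e : G.E, ∑ f ∈ Finset.univ.filter (fun f => G.r f = G.r e),
        ((((Real.sqrt (nIn G (G.r e)) : ℝ) : ℂ))⁻¹ * (((Real.sqrt (nIn G (G.r f)) : ℝ) : ℂ))⁻¹)
          • (F.S e * star (F.S f)) := by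
        refine Finset.sum_congr rfl fun e _ => ?_
        refine (Finset.sum_filter_of_ne fun f _ hne => ?_).symm
        by_contra hrf
        exact hne (by rw [orthR F (fun hh => hrf hh.symm), smul_zero])
    _ = ∑ v : G.V, ∑ e ∈ Finset.univ.filter (fun e => G.r e = v),
          ∑ f ∈ Finset.univ.filter (fun f => G.r f = G.r e),
        ((((Real.sqrt (nIn G (G.r e)) : ℝ) : ℂ))⁻¹ * (((Real.sqrt (nIn G (G.r f)) : ℝ) : ℂ))⁻¹)
          • (F.S e * star (F.S f)) :=
        (Finset.sum_fiberwise Finset.univ G.r _).symm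
    _ = ∑ v ∈ Finset.univ.filter (fun v => ∃ e : G.E, G.r e = v),
          ∑ e ∈ Finset.univ.filter (fun e => G.r e = v),
          ∑ f ∈ Finset.univ.filter (fun f => G.r f = G.r e),
        ((((Real.sqrt (nIn G (G.r e)) : ℝ) : ℂ))⁻¹ * (((Real.sqrt (nIn G (G.r f)) : ℝ) : ℂ))⁻¹)
          • (F.S e * star (F.S f)) := by
        refine (Finset.sum_filter_of_ne fun v _ hne => ?_).symm
        by_contra hex
        apply hne
        have hemp : Finset.univ.filter (fun e => G.r e = v) = ∅ := by
          ext e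
          simp only [Finset.mem_filter, Finset.mem_univ, true_and, Finset.notMem_empty,
            iff_false]
          exact fun h => hex ⟨e, h⟩
        rw [hemp, Finset.sum_empty]
    _ = ∑ v ∈ Finset.univ.filter (fun v => ∃ e : G.E, G.r e = v),
        ((nIn G v : ℂ))⁻¹ • ∑ e ∈ Finset.univ.filter (fun e => G.r e = v),
          ∑ f ∈ Finset.univ.filter (fun f => G.r f = v), F.S e * star (F.S f) := by
        refine Finset.sum_congr rfl fun v hv => ?_
        rw [Finset.smul_sum]
        refine Finset.sum_congr rfl fun e he => ?_
        have hre : G.r e = v := by simpa using he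
        simp only [hre]
        rw [Finset.smul_sum]
        refine Finset.sum_congr rfl fun f hf => ?_
        have hrf : G.r f = v := by simpa using hf
        simp only [hrf]
        congr 1
        rw [← mul_inv, ← Complex.ofReal_mul, Real.mul_self_sqrt (Nat.cast_nonneg _)]
        simp

end CKHelper

namespace CKHelper

variable {G : FinGraph} {B : Type} [CStarAlgebra B]

theorem Qform_mul (F : CKFamily G B) (g h : G.E) (hr : G.r g = G.r h) :
    (∑ v ∈ Finset.univ.filter (fun v => ∃ e : G.E, G.r e = v),
        ((nIn G v : ℂ))⁻¹ • ∑ e ∈ Finset.univ.filter (fun e => G.r e = v),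
          ∑ f ∈ Finset.univ.filter (fun f => G.r f = v), F.S e * star (F.S f))
      * (F.S g * star (F.S h))
    = ((nIn G (G.r h) : ℂ))⁻¹ •
        ∑ e ∈ Finset.univ.filter (fun e => G.r e = G.r h), F.S e * star (F.S h) := by
  have hterm : ∀ e f : G.E, (F.S e * star (F.S f)) * (F.S g * star (F.S h))
      = if f = g then F.S e * star (F.S h) else 0 := by
    intro e f
    by_cases hfg : f = g
    · subst hfg
      rw [if_pos rfl]
      have hA : (F.S e * star (F.S f)) * (F.S f * star (F.S h))
          = F.S e * ((star (F.S f) * F.S f) * star (F.S h)) := by noncomm_ring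
      rw [hA, F.SS, hr, P_mul_starS]
    · rw [if_neg hfg]
      have hA : (F.S e * star (F.S f)) * (F.S g * star (F.S h))
          = F.S e * ((star (F.S f) * F.S g) * star (F.S h)) := by noncomm_ring
      rw [hA, orthS F hfg]
      simp
  have hinner : ∀ v : G.V,
      (∑ e ∈ Finset.univ.filter (fun e => G.r e = v),
        ∑ f ∈ Finset.univ.filter (fun f => G.r f = v), F.S e * star (F.S f))
        * (F.S g * star (F.S h))
      = if G.r g = v then
          ∑ e ∈ Finset.univ.filter (fun e => G.r e = v), F.S e * star (F.S h) else 0 := by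
    intro v
    rw [Finset.sum_mul]
    have hstep : ∀ e ∈ Finset.univ.filter (fun e => G.r e = v),
        (∑ f ∈ Finset.univ.filter (fun f => G.r f = v), F.S e * star (F.S f))
          * (F.S g * star (F.S h))
        = if G.r g = v then F.S e * star (F.S h) else 0 := by
      intro e _
      rw [Finset.sum_mul]
      simp only [hterm e]
      rw [Finset.sum_ite_eq' (Finset.univ.filter (fun f => G.r f = v)) g
        (fun _ => F.S e * star (F.S h))]
      simp only [Finset.mem_filter, Finset.mem_univ, true_and]
    rw [Finset.sum_congr rfl hstep]
    by_cases hgv : G.r g = v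
    · simp [hgv]
    · simp [hgv]
  rw [Finset.sum_mul]
  have hmem : G.r h ∈ Finset.univ.filter (fun v => ∃ e : G.E, G.r e = v) := by
    simp only [Finset.mem_filter, Finset.mem_univ, true_and]
    exact ⟨h, rfl⟩
  rw [Finset.sum_eq_single_of_mem (G.r h) hmem]
  · rw [smul_mul_assoc, hinner, if_pos hr]
  · intro v _ hne
    rw [smul_mul_assoc, hinner, if_neg (fun hgv => hne (hgv.symm.trans hr)), smul_zero]

theorem Qform_sa (F : CKFamily G B) :
    star (∑ v ∈ Finset.univ.filter (fun v => ∃ e : G.E, G.r e = v),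
        ((nIn G v : ℂ))⁻¹ • ∑ e ∈ Finset.univ.filter (fun e => G.r e = v),
          ∑ f ∈ Finset.univ.filter (fun f => G.r f = v), F.S e * star (F.S f))
    = ∑ v ∈ Finset.univ.filter (fun v => ∃ e : G.E, G.r e = v),
        ((nIn G v : ℂ))⁻¹ • ∑ e ∈ Finset.univ.filter (fun e => G.r e = v),
          ∑ f ∈ Finset.univ.filter (fun f => G.r f = v), F.S e * star (F.S f) := by
  rw [star_sum]
  refine Finset.sum_congr rfl fun v _ => ?_
  rw [star_smul]
  have hc : star ((nIn G v : ℂ))⁻¹ = ((nIn G v : ℂ))⁻¹ := by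
    simp [Complex.star_def, map_inv₀]
  rw [hc]
  congr 1
  calc star (∑ e ∈ Finset.univ.filter (fun e => G.r e = v),
        ∑ f ∈ Finset.univ.filter (fun f => G.r f = v), F.S e * star (F.S f))
      = ∑ e ∈ Finset.univ.filter (fun e => G.r e = v),
          ∑ f ∈ Finset.univ.filter (fun f => G.r f = v), F.S f * star (F.S e) := by
        rw [star_sum]
        refine Finset.sum_congr rfl fun e _ => ?_
        rw [star_sum]
        refine Finset.sum_congr rfl fun f _ => ?_
        simp [star_mul]
    _ = ∑ f ∈ Finset.univ.filter (fun f => G.r f = v),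
          ∑ e ∈ Finset.univ.filter (fun e => G.r e = v), F.S f * star (F.S e) :=
        Finset.sum_comm

theorem mul_Qform (F : CKFamily G B) (g h : G.E) (hr : G.r g = G.r h) :
    (F.S g * star (F.S h)) *
      (∑ v ∈ Finset.univ.filter (fun v => ∃ e : G.E, G.r e = v),
        ((nIn G v : ℂ))⁻¹ • ∑ e ∈ Finset.univ.filter (fun e => G.r e = v),
          ∑ f ∈ Finset.univ.filter (fun f => G.r f = v), F.S e * star (F.S f))
    = ((nIn G (G.r h) : ℂ))⁻¹ •
        ∑ f ∈ Finset.univ.filter (fun f => G.r f = G.r h), F.S g * star (F.S f) := by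
  have h1 := Qform_mul F h g hr.symm
  have h2 := congrArg star h1
  rw [star_mul, Qform_sa] at h2
  rw [star_mul, star_star, star_smul, star_sum] at h2
  have hc : star ((nIn G (G.r g) : ℂ))⁻¹ = ((nIn G (G.r g) : ℂ))⁻¹ := by
    simp [Complex.star_def, map_inv₀]
  rw [hc] at h2
  simp only [star_mul, star_star] at h2
  rw [hr] at h2
  convert h2 using 3

end CKHelper

namespace CKHelper

variable {G : FinGraph} {B : Type} [CStarAlgebra B]

/-- The length-one path given by an edge. -/
def epath (G : FinGraph) (e : G.E) : GPath G 1 where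
  vert := fun i => if i = 0 then G.s e else G.r e
  edge := fun _ => e
  src_eq := by
    intro i
    fin_cases i
    simp
  rng_eq := by
    intro i
    fin_cases i
    simp [Fin.succ]

theorem SP_epath (F : CKFamily G B) (e : G.E) : F.SP (epath G e) = F.S e := by
  simp [CKFamily.SP, epath, List.ofFn_succ]

theorem Qsum_mul_S (F : CKFamily G B) (e : G.E) :
    (∑ g : G.E, F.S g * star (F.S g)) * F.S e = F.S e := by
  rw [Finset.sum_mul]
  rw [Finset.sum_eq_single e]
  · rw [mul_assoc, F.SS, S_mul_P]
  · intro g _ hge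
    rw [mul_assoc, orthS F hge, mul_zero]
  · intro habs
    exact absurd (Finset.mem_univ e) habs

theorem Qsum_sa (F : CKFamily G B) :
    star (∑ g : G.E, F.S g * star (F.S g)) = ∑ g : G.E, F.S g * star (F.S g) := by
  rw [star_sum]
  refine Finset.sum_congr rfl fun g _ => ?_
  simp [star_mul]

theorem Qsum_mul_SP (F : CKFamily G B) {n : ℕ} (μ : GPath G (n + 1)) :
    (∑ g : G.E, F.S g * star (F.S g)) * F.SP μ = F.SP μ := by
  have hSP : F.SP μ = F.S (μ.edge 0)
      * (List.ofFn (fun i : Fin n => F.S (μ.edge i.succ))).prod := by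
    rw [CKFamily.SP, List.ofFn_succ, List.prod_cons]
  rw [hSP, ← mul_assoc, Qsum_mul_S]

theorem Qsum_comm_gen (F : CKFamily G B) {n : ℕ} (μ ν : GPath G n) :
    (∑ g : G.E, F.S g * star (F.S g)) * (F.SP μ * star (F.SP ν))
      = (F.SP μ * star (F.SP ν)) * (∑ g : G.E, F.S g * star (F.S g)) := by
  cases n with
  | zero =>
    have hμ : F.SP μ = 1 := by simp [CKFamily.SP]
    have hν : F.SP ν = 1 := by simp [CKFamily.SP]
    rw [hμ, hν]
    simp
  | succ k =>
    have h1 : (∑ g : G.E, F.S g * star (F.S g)) * (F.SP μ * star (F.SP ν))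
        = F.SP μ * star (F.SP ν) := by
      rw [← mul_assoc, Qsum_mul_SP]
    have h2 : star (F.SP ν) * (∑ g : G.E, F.S g * star (F.S g)) = star (F.SP ν) := by
      have h3 := congrArg star (Qsum_mul_SP F ν)
      rwa [star_mul, Qsum_sa] at h3
    rw [h1, mul_assoc, h2]

theorem Qform_eq_of_inj (F : CKFamily G B) (hinj : Function.Injective G.r) :
    (∑ v ∈ Finset.univ.filter (fun v => ∃ e : G.E, G.r e = v),
        ((nIn G v : ℂ))⁻¹ • ∑ e ∈ Finset.univ.filter (fun e => G.r e = v),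
          ∑ f ∈ Finset.univ.filter (fun f => G.r f = v), F.S e * star (F.S f))
      = ∑ g : G.E, F.S g * star (F.S g) := by
  have himg : Finset.univ.filter (fun v => ∃ e : G.E, G.r e = v)
      = Finset.image G.r Finset.univ := by
    ext v
    simp [Finset.mem_image, eq_comm]
  rw [himg, Finset.sum_image (fun a _ b _ hab => hinj hab)]
  refine Finset.sum_congr rfl fun e _ => ?_
  have hfib : Finset.univ.filter (fun f => G.r f = G.r e) = {e} := by
    ext f
    simp only [Finset.mem_filter, Finset.mem_univ, true_and, Finset.mem_singleton]
    exact ⟨fun h => hinj h, fun h => h ▸ rfl⟩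
  have hn : nIn G (G.r e) = 1 := by rw [nIn, hfib, Finset.card_singleton]
  rw [hn, hfib]
  simp

end CKHelper

/-- For the universal Cuntz–Krieger family of a finite graph `E`, the projection
`V(1) = s s*` (with `s = Σ_e n_{r(e)}^{-1/2} s_e`) equals
`Σ_{v ∈ r(E¹)} (1/n_v) Σ_{e,f ∈ r⁻¹(v)} s_e s_f*`, and it is central in the AF-core
`F_E = span{s_μ s_ν* : |μ| = |ν|}` if and only if `r : E¹ → E⁰` is injective; centrality
forces, for edges `g, h` with `r(g) = r(h)`, the identity
`Σ_{e ∈ r⁻¹(v)} s_e s_h* = Σ_{f ∈ r⁻¹(v)} s_g s_f*` and hence `g = h`. -/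
theorem core_central_projection_iff_r_injective {G : FinGraph} {B : Type} [CStarAlgebra B]
    (F : CKFamily G B)
    (hGen : closure (↑(NonUnitalStarAlgebra.adjoin ℂ
      (Set.range F.P ∪ Set.range F.S)) : Set B) = Set.univ)
    (hUniv : ∀ (C : Type) [CStarAlgebra C] (F' : CKFamily G C),
      ∃ φ : B →⋆ₐ[ℂ] C, (∀ v, φ (F.P v) = F'.P v) ∧ (∀ e, φ (F.S e) = F'.S e)) :
    (∑ e : G.E, (((Real.sqrt (nIn G (G.r e)) : ℝ) : ℂ))⁻¹ • F.S e) *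
        star (∑ e : G.E, (((Real.sqrt (nIn G (G.r e)) : ℝ) : ℂ))⁻¹ • F.S e) =
      ∑ v ∈ Finset.univ.filter (fun v => ∃ e : G.E, G.r e = v),
        ((nIn G v : ℂ))⁻¹ • ∑ e ∈ Finset.univ.filter (fun e => G.r e = v),
          ∑ f ∈ Finset.univ.filter (fun f => G.r f = v), F.S e * star (F.S f) ∧
    ((∀ x ∈ closure (↑(Submodule.span ℂ
        {x : B | ∃ (n : ℕ) (μ ν : GPath G n), x = F.SP μ * star (F.SP ν)}) : Set B),
        (∑ e : G.E, (((Real.sqrt (nIn G (G.r e)) : ℝ) : ℂ))⁻¹ • F.S e) *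
            star (∑ e : G.E, (((Real.sqrt (nIn G (G.r e)) : ℝ) : ℂ))⁻¹ • F.S e) * x =
          x * ((∑ e : G.E, (((Real.sqrt (nIn G (G.r e)) : ℝ) : ℂ))⁻¹ • F.S e) *
            star (∑ e : G.E, (((Real.sqrt (nIn G (G.r e)) : ℝ) : ℂ))⁻¹ • F.S e))) ↔
      Function.Injective G.r) ∧
    ((∀ x ∈ closure (↑(Submodule.span ℂ
        {x : B | ∃ (n : ℕ) (μ ν : GPath G n), x = F.SP μ * star (F.SP ν)}) : Set B),
        (∑ e : G.E, (((Real.sqrt (nIn G (G.r e)) : ℝ) : ℂ))⁻¹ • F.S e) *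
            star (∑ e : G.E, (((Real.sqrt (nIn G (G.r e)) : ℝ) : ℂ))⁻¹ • F.S e) * x =
          x * ((∑ e : G.E, (((Real.sqrt (nIn G (G.r e)) : ℝ) : ℂ))⁻¹ • F.S e) *
            star (∑ e : G.E, (((Real.sqrt (nIn G (G.r e)) : ℝ) : ℂ))⁻¹ • F.S e))) →
      ∀ g h : G.E, G.r g = G.r h →
        (∑ e ∈ Finset.univ.filter (fun e => G.r e = G.r h), F.S e * star (F.S h)) =
          (∑ f ∈ Finset.univ.filter (fun f => G.r f = G.r h), F.S g * star (F.S f)) ∧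
        g = h) := by
  classical
  have hV := CKHelper.Vexpand F
  have main : (∀ x ∈ closure (↑(Submodule.span ℂ
        {x : B | ∃ (n : ℕ) (μ ν : GPath G n), x = F.SP μ * star (F.SP ν)}) : Set B),
        (∑ e : G.E, (((Real.sqrt (nIn G (G.r e)) : ℝ) : ℂ))⁻¹ • F.S e) *
            star (∑ e : G.E, (((Real.sqrt (nIn G (G.r e)) : ℝ) : ℂ))⁻¹ • F.S e) * x =
          x * ((∑ e : G.E, (((Real.sqrt (nIn G (G.r e)) : ℝ) : ℂ))⁻¹ • F.S e) *
            star (∑ e : G.E, (((Real.sqrt (nIn G (G.r e)) : ℝ) : ℂ))⁻¹ • F.S e))) →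
      ∀ g h : G.E, G.r g = G.r h →
        (∑ e ∈ Finset.univ.filter (fun e => G.r e = G.r h), F.S e * star (F.S h)) =
          (∑ f ∈ Finset.univ.filter (fun f => G.r f = G.r h), F.S g * star (F.S f)) ∧
        g = h := by
    intro hcent g h hgh
    have hx : (F.S g * star (F.S h)) ∈ closure (↑(Submodule.span ℂ
        {x : B | ∃ (n : ℕ) (μ ν : GPath G n), x = F.SP μ * star (F.SP ν)}) : Set B) :=
      subset_closure (Submodule.subset_span
        ⟨1, CKHelper.epath G g, CKHelper.epath G h, by
          rw [CKHelper.SP_epath, CKHelper.SP_epath]⟩)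
    have hcomm := hcent _ hx
    rw [hV] at hcomm
    rw [CKHelper.Qform_mul F g h hgh, CKHelper.mul_Qform F g h hgh] at hcomm
    have hn : ((nIn G (G.r h) : ℂ)) ≠ 0 := by
      have hcard : nIn G (G.r h) ≠ 0 :=
        Finset.card_ne_zero_of_mem
          (by simp : h ∈ Finset.univ.filter (fun e => G.r e = G.r h))
      exact_mod_cast hcard
    have hsum : (∑ e ∈ Finset.univ.filter (fun e => G.r e = G.r h), F.S e * star (F.S h)) =
        (∑ f ∈ Finset.univ.filter (fun f => G.r f = G.r h), F.S g * star (F.S f)) := by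
      have h5 := congrArg (fun y => (nIn G (G.r h) : ℂ) • y) hcomm
      simpa [smul_smul, mul_inv_cancel₀ hn] using h5
    refine ⟨hsum, ?_⟩
    by_contra hne
    have hL : star (F.S h) * (∑ e ∈ Finset.univ.filter (fun e => G.r e = G.r h),
        F.S e * star (F.S h)) * F.S h = F.P (G.r h) := by
      rw [Finset.mul_sum, Finset.sum_mul]
      rw [Finset.sum_eq_single_of_mem h
        (by simp : h ∈ Finset.univ.filter (fun e => G.r e = G.r h))]
      · have hA : star (F.S h) * (F.S h * star (F.S h)) * F.S h
            = (star (F.S h) * F.S h) * (star (F.S h) * F.S h) := by noncomm_ring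
        rw [hA, F.SS, F.P_idem]
      · intro e _ hne2
        have hA : star (F.S h) * (F.S e * star (F.S h)) * F.S h
            = (star (F.S h) * F.S e) * (star (F.S h) * F.S h) := by noncomm_ring
        rw [hA, CKHelper.orthS F (Ne.symm hne2)]
        simp
    have hR : star (F.S h) * (∑ f ∈ Finset.univ.filter (fun f => G.r f = G.r h),
        F.S g * star (F.S f)) * F.S h = 0 := by
      rw [Finset.mul_sum, Finset.sum_mul]
      apply Finset.sum_eq_zero
      intro f _
      have hA : star (F.S h) * (F.S g * star (F.S f)) * F.S h
          = (star (F.S h) * F.S g) * (star (F.S f) * F.S h) := by noncomm_ring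
      rw [hA, CKHelper.orthS F (Ne.symm hne)]
      simp
    rw [hsum, hR] at hL
    exact F.P_ne _ hL.symm
  refine ⟨hV, ⟨?_, ?_⟩, ?_⟩
  · intro hcent g h hgh
    exact (main hcent g h hgh).2
  · intro hinj
    rw [hV, CKHelper.Qform_eq_of_inj F hinj]
    intro x hx
    have hclosed : IsClosed {y : B | (∑ g : G.E, F.S g * star (F.S g)) * y
        = y * (∑ g : G.E, F.S g * star (F.S g))} :=
      isClosed_eq (continuous_const.mul continuous_id) (continuous_id.mul continuous_const)
    have hspan : (↑(Submodule.span ℂ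
        {x : B | ∃ (n : ℕ) (μ ν : GPath G n), x = F.SP μ * star (F.SP ν)}) : Set B)
        ⊆ {y : B | (∑ g : G.E, F.S g * star (F.S g)) * y
          = y * (∑ g : G.E, F.S g * star (F.S g))} := by
      intro y hy
      induction hy using Submodule.span_induction with
      | mem z hz =>
        obtain ⟨n, μ, ν, rfl⟩ := hz
        exact CKHelper.Qsum_comm_gen F μ ν
      | zero => simp
      | add a b ha hb iha ihb =>
        simp only [Set.mem_setOf_eq] at *
        rw [mul_add, add_mul, iha, ihb]
      | smul c a ha iha =>
        simp only [Set.mem_setOf_eq] at *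
        rw [mul_smul_comm, smul_mul_assoc, iha]
    exact closure_minimal hspan hclosed hx
  · intro hcent g h hgh
    exact main hcent g h hgh
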